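/- Let X_1,…,X_n be independent with X ~ ELS(λ1_n, θ, α1_n; F_b) where θ = (θ_1,…,θ_n) ∈ D_+ (or E_+), and let Y_1,…,Y_n be i.i.d. with Y ~ ELS(λ1_n, θ°1_n, α1_n; F_b) for a common scalar scale θ° > 0 (same location λ and shape α for both samples). If w ↦ w²·r̃_b(w) is increasing in w > 0 and n·θ° ≥ Σ_{i=1}^n θ_i, then X_{n−1:n} ≤_st Y_{n−1:n}. -/

import Mathlib

open Finset

/-- Reversed hazard rate of the baseline distribution: `f_b / F_b`. -/
noncomputable def rtilde (Fb fb : ℝ → ℝ) : ℝ → ℝ := fun w => fb w / Fb w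

/-- Hazard rate of the baseline distribution: `f_b / (1 - F_b)`. -/
noncomputable def hrate (Fb fb : ℝ → ℝ) : ℝ → ℝ := fun w => fb w / (1 - Fb w)

/-- CDF of the exponentiated location-scale model `ELS(lam, th, al; F_b)`. -/
noncomputable def elsCDF (Fb : ℝ → ℝ) (lam th al : ℝ) : ℝ → ℝ :=
  fun x => Fb ((x - lam) / th) ^ al

/-- CDF of the second-largest order statistic of `n` independent random
variables with CDFs `F 0, …, F (n-1)`. -/
noncomputable def secondMaxCDF (n : ℕ) (F : Fin n → ℝ → ℝ) : ℝ → ℝ := fun x =>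
  (∑ l : Fin n, ∏ k ∈ Finset.univ.erase l, F k x) -
    ((n : ℝ) - 1) * ∏ k : Fin n, F k x

/-- CDF of the second-largest order statistic of `n` dependent random variables
with marginal CDFs `F i`, coupled by the Archimedean copula with generator `ψ`
(and inverse `φ`). -/
noncomputable def secondMaxCDFdep (n : ℕ) (ψ φ : ℝ → ℝ) (F : Fin n → ℝ → ℝ) : ℝ → ℝ := fun x =>
  (∑ l : Fin n, ψ (∑ k ∈ Finset.univ.erase l, φ (F k x))) -
    ((n : ℝ) - 1) * ψ (∑ k : Fin n, φ (F k x))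

/-- Reversed hazard rate of a CDF `F`: `F' / F`. -/
noncomputable def rhr (F : ℝ → ℝ) : ℝ → ℝ := fun x => deriv F x / F x

/-- Sum of the first `k` coordinates of a vector (partial sum from below). -/
def psum {n : ℕ} (x : Fin n → ℝ) (k : ℕ) : ℝ :=
  ∑ i ∈ Finset.univ.filter (fun i : Fin n => (i : ℕ) < k), x i

/-- Sum of the last `k` coordinates of a vector (partial sum from above). -/
def ssum {n : ℕ} (x : Fin n → ℝ) (k : ℕ) : ℝ :=
  ∑ i ∈ Finset.univ.filter (fun i : Fin n => n - k ≤ (i : ℕ)), x i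

/-- `E₊`: vectors with positive coordinates arranged in ascending order. -/
def EPlus {n : ℕ} (x : Fin n → ℝ) : Prop := (∀ i, 0 < x i) ∧ Monotone x

/-- `D₊`: vectors with positive coordinates arranged in descending order. -/
def DPlus {n : ℕ} (x : Fin n → ℝ) : Prop := (∀ i, 0 < x i) ∧ Antitone x

/-- `ψ` is an `n`-monotone Archimedean copula generator with right-continuous
inverse `φ`. -/
structure IsArchGen (n : ℕ) (ψ φ : ℝ → ℝ) : Prop where
  cont : Continuous ψ
  one : ψ 0 = 1
  anti : StrictAntiOn ψ (Set.Ici 0)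
  tend : Filter.Tendsto ψ Filter.atTop (nhds 0)
  range : ∀ x ≥ (0:ℝ), ψ x ∈ Set.Icc (0:ℝ) 1
  dm_sign : ∀ i ≤ n - 2, ∀ x ≥ (0:ℝ), 0 ≤ (-1:ℝ) ^ i * iteratedDeriv i ψ x
  dm_anti : AntitoneOn (fun x => (-1:ℝ) ^ (n - 2) * iteratedDeriv (n - 2) ψ x) (Set.Ici 0)
  dm_convex : ConvexOn ℝ (Set.Ici 0) (fun x => (-1:ℝ) ^ (n - 2) * iteratedDeriv (n - 2) ψ x)
  inv_left : ∀ x ≥ (0:ℝ), φ (ψ x) = x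
  inv_right : ∀ v ∈ Set.Ioc (0:ℝ) 1, ψ (φ v) = v



/-- Partial derivative coefficient of the second-max polynomial. -/
noncomputable def Hcoef {n : ℕ} (p : Fin n → ℝ) (i : Fin n) : ℝ :=
  (∑ l ∈ Finset.univ.erase i, ∏ j ∈ (Finset.univ.erase l).erase i, p j) -
    ((n : ℝ) - 1) * ∏ j ∈ Finset.univ.erase i, p j

lemma card_erase_univ' {n : ℕ} (hn : 1 ≤ n) (i : Fin n) :
    (((Finset.univ : Finset (Fin n)).erase i).card : ℝ) = (n : ℝ) - 1 := by
  rw [Finset.card_erase_of_mem (Finset.mem_univ i), Finset.card_univ, Fintype.card_fin,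
    Nat.cast_sub hn, Nat.cast_one]

lemma Hcoef_nonneg {n : ℕ} (hn : 1 ≤ n) {p : Fin n → ℝ}
    (h0 : ∀ k, 0 ≤ p k) (h1 : ∀ k, p k ≤ 1) (i : Fin n) : 0 ≤ Hcoef p i := by
  have hmul : ((n : ℝ) - 1) * ∏ j ∈ Finset.univ.erase i, p j
      = ∑ _l ∈ Finset.univ.erase i, ∏ j ∈ Finset.univ.erase i, p j := by
    rw [Finset.sum_const, nsmul_eq_mul, card_erase_univ' hn]
  rw [Hcoef, hmul, ← Finset.sum_sub_distrib]
  apply Finset.sum_nonneg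
  intro l hl
  rw [sub_nonneg, Finset.erase_right_comm]
  calc ∏ j ∈ Finset.univ.erase i, p j
      = p l * ∏ j ∈ (Finset.univ.erase i).erase l, p j :=
        (Finset.mul_prod_erase _ _ (by
          simp only [Finset.mem_erase] at hl ⊢
          exact ⟨hl.1, Finset.mem_univ l⟩)).symm
    _ ≤ 1 * ∏ j ∈ (Finset.univ.erase i).erase l, p j :=
        mul_le_mul_of_nonneg_right (h1 l) (Finset.prod_nonneg fun j _ => h0 j)
    _ = _ := one_mul _

lemma mul_Hcoef {n : ℕ} (p : Fin n → ℝ) (i : Fin n) :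
    p i * Hcoef p i =
      (∑ l ∈ Finset.univ.erase i, ∏ j ∈ Finset.univ.erase l, p j) -
        ((n : ℝ) - 1) * ∏ j, p j := by
  rw [Hcoef, mul_sub, Finset.mul_sum]
  congr 1
  · apply Finset.sum_congr rfl
    intro l hl
    exact Finset.mul_prod_erase _ _
      (Finset.mem_erase.2 ⟨Ne.symm (Finset.mem_erase.1 hl).1, Finset.mem_univ i⟩)
  · rw [← mul_assoc, mul_comm (p i), mul_assoc,
      Finset.mul_prod_erase _ _ (Finset.mem_univ i)]

lemma mul_Hcoef_le {n : ℕ} {p : Fin n → ℝ}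
    (h0 : ∀ k, 0 ≤ p k) {i j : Fin n} (hij : p j ≤ p i) :
    p j * Hcoef p j ≤ p i * Hcoef p i := by
  rcases eq_or_ne i j with rfl | hne
  · exact le_refl _
  · rw [mul_Hcoef, mul_Hcoef]
    apply sub_le_sub_right
    rw [Finset.sum_erase_eq_sub (Finset.mem_univ j), Finset.sum_erase_eq_sub (Finset.mem_univ i)]
    apply sub_le_sub_left
    -- goal : ∏_{univ.erase i} p ≤ ∏_{univ.erase j} p
    rw [← Finset.mul_prod_erase _ p (Finset.mem_erase.2 ⟨Ne.symm hne, Finset.mem_univ j⟩),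
        ← Finset.mul_prod_erase _ p (Finset.mem_erase.2 ⟨hne, Finset.mem_univ i⟩),
        Finset.erase_right_comm]
    exact mul_le_mul_of_nonneg_right hij (Finset.prod_nonneg fun k _ => h0 k)

lemma sum_erase_swap {n : ℕ} (A : Fin n → Fin n → ℝ) :
    ∑ l, ∑ k ∈ Finset.univ.erase l, A l k = ∑ k, ∑ l ∈ Finset.univ.erase k, A l k := by
  simp_rw [Finset.sum_erase_eq_sub (Finset.mem_univ _), Finset.sum_sub_distrib]
  rw [Finset.sum_comm]

/-- Mean value based comparison allowing finitely many exceptional points. -/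
lemma le_of_hasDerivAt_nonneg_except (B : Finset ℝ) :
    ∀ (f f' : ℝ → ℝ) (a b : ℝ), a ≤ b → ContinuousOn f (Set.Icc a b) →
    (∀ x ∈ Set.Ioo a b, x ∉ B → HasDerivAt f (f' x) x ∧ 0 ≤ f' x) →
    f a ≤ f b := by
  induction B using Finset.strongInduction with
  | _ B ih =>
    intro f f' a b hab hcont hd
    by_cases hB : ∃ c ∈ B, c ∈ Set.Ioo a b
    · obtain ⟨c, hcB, hc⟩ := hB
      have h1 : f a ≤ f c := ih (B.erase c) (Finset.erase_ssubset hcB) f f' a c hc.1.le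
        (hcont.mono (Set.Icc_subset_Icc le_rfl hc.2.le))
        (fun y hy hyB => hd y ⟨hy.1, hy.2.trans hc.2⟩
          (fun hyB' => hyB (Finset.mem_erase.2 ⟨ne_of_lt hy.2, hyB'⟩)))
      have h2 : f c ≤ f b := ih (B.erase c) (Finset.erase_ssubset hcB) f f' c b hc.2.le
        (hcont.mono (Set.Icc_subset_Icc hc.1.le le_rfl))
        (fun y hy hyB => hd y ⟨hc.1.trans hy.1, hy.2⟩
          (fun hyB' => hyB (Finset.mem_erase.2 ⟨ne_of_gt hy.1, hyB'⟩)))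
      exact h1.trans h2
    · push_neg at hB
      have hmono : MonotoneOn f (Set.Icc a b) := by
        apply monotoneOn_of_hasDerivWithinAt_nonneg (f' := f') (convex_Icc a b) hcont
        · intro y hy
          rw [interior_Icc] at hy ⊢
          exact ((hd y hy (fun h => hB y h hy)).1).hasDerivWithinAt
        · intro y hy
          rw [interior_Icc] at hy
          exact (hd y hy (fun h => hB y h hy)).2
      exact hmono (Set.left_mem_Icc.2 hab) (Set.right_mem_Icc.2 hab) hab

theorem second_largest_st_scale_mean_bound
    (n : ℕ) (hn : 2 ≤ n)
    (Fb fb : ℝ → ℝ)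
    (hFb_mono : Monotone Fb)
    (hFb_range : ∀ x, Fb x ∈ Set.Icc (0:ℝ) 1)
    (hFb_deriv : ∀ x, HasDerivAt Fb (fb x) x)
    (hfb_nonneg : ∀ x, 0 ≤ fb x)
    (lam α θ₀ : ℝ) (hlam : 0 < lam) (hα : 0 < α) (hθ₀ : 0 < θ₀)
    (θ : Fin n → ℝ)
    (horder : DPlus θ ∨ EPlus θ)
    (hinc : MonotoneOn (fun w => w ^ 2 * rtilde Fb fb w) (Set.Ioi 0))
    (hsum : (n : ℝ) * θ₀ ≥ ∑ i, θ i) :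
    ∀ x, lam < x →
      secondMaxCDF n (fun _ => elsCDF Fb lam θ₀ α) x ≤
        secondMaxCDF n (fun i => elsCDF Fb lam (θ i) α) x := by
  classical
  intro x hx
  have hn1 : 1 ≤ n := le_trans (by norm_num) hn
  have hθpos : ∀ i, 0 < θ i := by
    rcases horder with h | h
    · exact h.1
    · exact h.1
  have hc : 0 < x - lam := sub_pos.2 hx
  have hFbc : Continuous Fb := by
    rw [continuous_iff_continuousAt]; exact fun y => (hFb_deriv y).continuousAt
  set c : ℝ := x - lam with hcdef
  set T : Fin n → ℝ → ℝ := fun i s => θ₀ + s * (θ i - θ₀) with hTdef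
  set q : Fin n → ℝ → ℝ := fun i s => Fb (c / T i s) ^ α with hqdef
  set ψ : ℝ → ℝ := fun s =>
    (∑ l : Fin n, ∏ k ∈ Finset.univ.erase l, q k s) - ((n : ℝ) - 1) * ∏ k, q k s with hψdef
  have hψ0 : ψ 0 = secondMaxCDF n (fun _ => elsCDF Fb lam θ₀ α) x := by
    simp [hψdef, hqdef, hTdef, secondMaxCDF, elsCDF, div_eq_div_iff, hcdef]
  have hψ1 : ψ 1 = secondMaxCDF n (fun i => elsCDF Fb lam (θ i) α) x := by
    simp [hψdef, hqdef, hTdef, secondMaxCDF, elsCDF, hcdef]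
  rw [← hψ0, ← hψ1]
  -- positivity of the path
  have hTpos : ∀ i, ∀ s ∈ Set.Icc (0:ℝ) 1, 0 < T i s := by
    intro i s hs
    have h1 : min θ₀ (θ i) ≤ θ₀ + s * (θ i - θ₀) := by
      nlinarith [mul_nonneg hs.1 (sub_nonneg.2 (min_le_right θ₀ (θ i))),
        mul_nonneg (sub_nonneg.2 hs.2) (sub_nonneg.2 (min_le_left θ₀ (θ i)))]
    exact lt_of_lt_of_le (lt_min hθ₀ (hθpos i)) h1
  have hq0 : ∀ i s, 0 ≤ q i s := fun i s => Real.rpow_nonneg (hFb_range _).1 α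
  have hq1 : ∀ i s, q i s ≤ 1 := fun i s =>
    Real.rpow_le_one (hFb_range _).1 (hFb_range _).2 hα.le
  set G : ℝ → ℝ := fun u =>
    if Fb (c / u) = 0 then 0
    else -(α * Fb (c / u) ^ (α - 1) * fb (c / u) * (c / u ^ 2)) with hGdef
  have hGle : ∀ u, G u ≤ 0 := by
    intro u
    by_cases h : Fb (c / u) = 0
    · simp [hGdef, h]
    · simp only [hGdef, if_neg h]
      rw [neg_nonpos]
      have h1 : (0:ℝ) ≤ Fb (c / u) ^ (α - 1) := Real.rpow_nonneg (hFb_range _).1 _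
      have h2 : (0:ℝ) ≤ c / u ^ 2 := div_nonneg hc.le (sq_nonneg u)
      exact mul_nonneg (mul_nonneg (mul_nonneg hα.le h1) (hfb_nonneg _)) h2
  -- chain-rule derivative where the base is nonzero
  have hderiv_q : ∀ (i : Fin n) (s : ℝ), 0 < T i s → Fb (c / T i s) ≠ 0 →
      HasDerivAt (q i) ((θ i - θ₀) * G (T i s)) s := by
    intro i s hT hFb0
    have hTd : HasDerivAt (fun u : ℝ => T i u) (θ i - θ₀) s := by
      simp only [hTdef]
      simpa using ((hasDerivAt_id s).mul_const (θ i - θ₀)).const_add θ₀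
    have hdiv : HasDerivAt (fun u => c / T i u)
        ((0 * T i s - c * (θ i - θ₀)) / T i s ^ 2) s :=
      (hasDerivAt_const s c).div hTd (ne_of_gt hT)
    have hFbd : HasDerivAt (fun u => Fb (c / T i u))
        (fb (c / T i s) * ((0 * T i s - c * (θ i - θ₀)) / T i s ^ 2)) s :=
      (hFb_deriv (c / T i s)).comp s hdiv
    have hrpow : HasDerivAt (fun u => Fb (c / T i u) ^ α)
        (α * Fb (c / T i s) ^ (α - 1) *
          (fb (c / T i s) * ((0 * T i s - c * (θ i - θ₀)) / T i s ^ 2))) s := by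
      have h := (Real.hasDerivAt_rpow_const (x := Fb (c / T i s)) (p := α) (Or.inl hFb0))
      have := h.comp s hFbd
      exact this
    have : HasDerivAt (q i) (α * Fb (c / T i s) ^ (α - 1) *
          (fb (c / T i s) * ((0 * T i s - c * (θ i - θ₀)) / T i s ^ 2))) s := by
      rw [hqdef]; exact hrpow
    convert this using 1
    rw [hGdef]
    simp only [hFb0, if_false, ite_false]
    field_simp
    ring
  -- the bad set
  set bad : Fin n → Set ℝ := fun i =>
    {s | s ∈ Set.Ioo (0:ℝ) 1 ∧ ¬ HasDerivAt (q i) ((θ i - θ₀) * G (T i s)) s} with hbaddef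
  have hzero_mono : ∀ (i : Fin n) (s0 s' : ℝ), 0 < T i s0 → T i s0 ≤ T i s' →
      Fb (c / T i s0) = 0 → Fb (c / T i s') = 0 := by
    intro i s0 s' h0 hle hz
    have h0' : 0 < T i s' := lt_of_lt_of_le h0 hle
    have hdivle : c / T i s' ≤ c / T i s0 := by
      apply div_le_div_of_nonneg_left hc.le h0 hle
    exact le_antisymm (hz ▸ hFb_mono hdivle) (hFb_range _).1
  have hnotbad : ∀ (i : Fin n) (s0 s' : ℝ), 0 < T i s0 → Fb (c / T i s0) = 0 →
      T i s0 < T i s' → s' ∉ bad i := by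
    intro i s0 s' h0 hz hlt hb
    have hz' : Fb (c / T i s') = 0 := hzero_mono i s0 s' h0 hlt.le hz
    have hG0 : G (T i s') = 0 := by rw [hGdef]; simp [hz']
    apply hb.2
    rw [hG0, mul_zero]
    have hTc : Continuous (T i) := by
      rw [hTdef]; exact continuous_const.add (continuous_id.mul continuous_const)
    have hopen : IsOpen {u : ℝ | T i s0 < T i u} := isOpen_lt continuous_const hTc
    have hev : q i =ᶠ[nhds s'] (fun _ => (0:ℝ)) := by
      filter_upwards [hopen.mem_nhds hlt] with u hu
      have : Fb (c / T i u) = 0 := hzero_mono i s0 u h0 hu.le hz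
      rw [hqdef]
      simp only [this]
      exact Real.zero_rpow hα.ne'
    exact (hasDerivAt_const s' (0:ℝ)).congr_of_eventuallyEq hev
  have hbad_sub : ∀ i, (bad i).Subsingleton := by
    intro i s₁ hs₁ s₂ hs₂
    by_contra hne
    have hdne : θ i - θ₀ ≠ 0 := by
      intro h0
      apply hs₁.2
      have hqconst : q i = fun _ => Fb (c / θ₀) ^ α := by
        funext u; rw [hqdef]; simp [hTdef, h0]
      rw [h0, zero_mul, hqconst]
      exact hasDerivAt_const _ _
    have hz : ∀ s, s ∈ bad i → Fb (c / T i s) = 0 := by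
      intro s hb
      by_contra hnz
      exact hb.2 (hderiv_q i s (hTpos i s (Set.mem_Icc_of_Ioo hb.1)) hnz)
    have hz₁ := hz s₁ hs₁
    have hz₂ := hz s₂ hs₂
    have hTne : T i s₁ ≠ T i s₂ := by
      rw [hTdef]
      simp only [ne_eq, add_right_inj]
      intro hcontr
      exact hne (by
        have := mul_right_cancel₀ hdne hcontr
        exact this)
    rcases lt_or_gt_of_ne hTne with hlt | hgt
    · exact hnotbad i s₁ s₂ (hTpos i s₁ (Set.mem_Icc_of_Ioo hs₁.1)) hz₁ hlt hs₂
    · exact hnotbad i s₂ s₁ (hTpos i s₂ (Set.mem_Icc_of_Ioo hs₂.1)) hz₂ hgt hs₁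
  have hfin : (⋃ i, bad i).Finite := Set.finite_iUnion (fun i => (hbad_sub i).finite)
  -- continuity of ψ on [0,1]
  have hqc : ∀ i, ContinuousOn (q i) (Set.Icc 0 1) := by
    intro i
    rw [hqdef]
    apply ContinuousOn.rpow_const
    · apply hFbc.comp_continuousOn
      apply ContinuousOn.div continuousOn_const
      · apply Continuous.continuousOn
        rw [hTdef]; exact continuous_const.add (continuous_id.mul continuous_const)
      · exact fun s hs => ne_of_gt (hTpos i s hs)
    · exact fun s hs => Or.inr hα.le
  have hψc : ContinuousOn ψ (Set.Icc (0:ℝ) 1) := by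
    rw [hψdef]
    apply ContinuousOn.sub
    · exact continuousOn_finset_sum _ (fun l _ => continuousOn_finset_prod _ (fun k _ => hqc k))
    · exact continuousOn_const.mul (continuousOn_finset_prod _ (fun k _ => hqc k))
  -- the derivative candidate
  set Ψ' : ℝ → ℝ := fun s =>
    ∑ k, ((θ k - θ₀) * G (T k s)) * Hcoef (fun j => q j s) k with hΨ'def
  -- key comparison lemma
  have hkey : ∀ s ∈ Set.Icc (0:ℝ) 1, ∀ i j : Fin n, T j s < T i s →
      G (T j s) * Hcoef (fun k => q k s) j ≤ G (T i s) * Hcoef (fun k => q k s) i := by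
    intro s hs i j hlt
    have hTj : 0 < T j s := hTpos j s hs
    have hTi : 0 < T i s := hTpos i s hs
    have hH := fun k => Hcoef_nonneg hn1 (fun k => hq0 k s) (fun k => hq1 k s) k
    have hwij : c / T i s < c / T j s := by
      apply div_lt_div_of_pos_left hc hTj hlt
    have hwi_pos : 0 < c / T i s := div_pos hc hTi
    have hwj_pos : 0 < c / T j s := div_pos hc hTj
    rcases eq_or_ne (Fb (c / T i s)) 0 with hzi | hzi
    · have hGi : G (T i s) = 0 := by rw [hGdef]; simp [hzi]
      rw [hGi, zero_mul]
      exact mul_nonpos_of_nonpos_of_nonneg (hGle (T j s)) (hH j)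
    · have hFbi : 0 < Fb (c / T i s) := ((hFb_range _).1).lt_of_ne' hzi
      have hFbj : 0 < Fb (c / T j s) := lt_of_lt_of_le hFbi (hFb_mono hwij.le)
      have hGform : ∀ k : Fin n, 0 < Fb (c / T k s) → 0 < T k s →
          G (T k s) = -((α / c) * ((c / T k s) ^ 2 * rtilde Fb fb (c / T k s)) * q k s) := by
        intro k hFbk hTk
        rw [hGdef, hqdef]
        simp only [if_neg (ne_of_gt hFbk)]
        rw [rtilde]
        rw [Real.rpow_sub_one (ne_of_gt hFbk)]
        field_simp
      rw [hGform i hFbi hTi, hGform j hFbj hTj]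
      rw [neg_mul, neg_mul, neg_le_neg_iff]
      have hstep : (α / c) * ((c / T i s) ^ 2 * rtilde Fb fb (c / T i s)) ≤
          (α / c) * ((c / T j s) ^ 2 * rtilde Fb fb (c / T j s)) := by
        apply mul_le_mul_of_nonneg_left _ (div_nonneg hα.le hc.le)
        exact hinc hwi_pos hwj_pos hwij.le
      have hainneg : 0 ≤ (α / c) * ((c / T i s) ^ 2 * rtilde Fb fb (c / T i s)) := by
        apply mul_nonneg (div_nonneg hα.le hc.le)
        apply mul_nonneg (sq_nonneg _)
        exact div_nonneg (hfb_nonneg _) (hFb_range _).1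
      have hpq : q i s ≤ q j s :=
        Real.rpow_le_rpow (hFb_range _).1 (hFb_mono hwij.le) hα.le
      have hpH : q i s * Hcoef (fun k => q k s) i ≤ q j s * Hcoef (fun k => q k s) j :=
        mul_Hcoef_le (fun k => hq0 k s) hpq
      calc (α / c) * ((c / T i s) ^ 2 * rtilde Fb fb (c / T i s)) * q i s *
            Hcoef (fun k => q k s) i
          = (α / c) * ((c / T i s) ^ 2 * rtilde Fb fb (c / T i s)) *
            (q i s * Hcoef (fun k => q k s) i) := by ring
        _ ≤ (α / c) * ((c / T j s) ^ 2 * rtilde Fb fb (c / T j s)) *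
            (q j s * Hcoef (fun k => q k s) j) := by
            apply mul_le_mul hstep hpH
            · exact mul_nonneg (hq0 i s) (hH i)
            · exact le_trans hainneg hstep
        _ = (α / c) * ((c / T j s) ^ 2 * rtilde Fb fb (c / T j s)) * q j s *
            Hcoef (fun k => q k s) j := by ring
  -- good points: derivative exists and is nonnegative
  have hgood : ∀ s ∈ Set.Ioo (0:ℝ) 1, s ∉ hfin.toFinset →
      HasDerivAt ψ (Ψ' s) s ∧ 0 ≤ Ψ' s := by
    intro s hsIoo hsB
    have hsIcc : s ∈ Set.Icc (0:ℝ) 1 := Set.mem_Icc_of_Ioo hsIoo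
    have hps : ∀ k : Fin n, HasDerivAt (q k) ((θ k - θ₀) * G (T k s)) s := by
      intro k
      by_contra hk
      exact hsB (hfin.mem_toFinset.2 (Set.mem_iUnion.2 ⟨k, ⟨hsIoo, hk⟩⟩))
    set v : Fin n → ℝ := fun k => (θ k - θ₀) * G (T k s) with hvdef
    have hprod : ∀ u : Finset (Fin n), HasDerivAt (fun a => ∏ k ∈ u, q k a)
        (∑ k ∈ u, (∏ j ∈ u.erase k, q j s) * v k) s := by
      intro u
      have := HasDerivAt.fun_finsetProd (u := u) (f := fun k => q k) (f' := v)
        (fun k _ => hps k)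
      simpa [smul_eq_mul] using this
    constructor
    · have hψd : HasDerivAt ψ
          ((∑ l : Fin n, ∑ k ∈ Finset.univ.erase l,
              (∏ j ∈ (Finset.univ.erase l).erase k, q j s) * v k)
            - ((n:ℝ)-1) * ∑ k, (∏ j ∈ Finset.univ.erase k, q j s) * v k) s := by
        rw [hψdef]
        apply HasDerivAt.sub
        · exact HasDerivAt.fun_sum (fun l _ => hprod (Finset.univ.erase l))
        · exact (hprod Finset.univ).const_mul _
      have hrw : (∑ l : Fin n, ∑ k ∈ Finset.univ.erase l,
              (∏ j ∈ (Finset.univ.erase l).erase k, q j s) * v k)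
            - ((n:ℝ)-1) * ∑ k, (∏ j ∈ Finset.univ.erase k, q j s) * v k = Ψ' s := by
        rw [sum_erase_swap (fun l k => (∏ j ∈ (Finset.univ.erase l).erase k, q j s) * v k)]
        rw [hΨ'def, Finset.mul_sum, ← Finset.sum_sub_distrib]
        apply Finset.sum_congr rfl
        intro k _
        rw [Hcoef, mul_sub, Finset.mul_sum]
        congr 1
        · apply Finset.sum_congr rfl
          intro l _
          ring
        · ring
      rw [← hrw]
      exact hψd
    · -- nonnegativity via Chebyshev
      have hmv : Monovary (fun k => θ k - θ₀)
          (fun k => G (T k s) * Hcoef (fun j => q j s) k) := by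
        intro i j hlt
        by_contra hgt
        push_neg at hgt
        have hTlt : T j s < T i s := by
          rw [hTdef]
          simp only [add_lt_add_iff_left]
          apply mul_lt_mul_of_pos_left _ hsIoo.1
          exact hgt
        exact absurd (hkey s hsIcc i j hTlt) (not_le.2 hlt)
      have cheb := hmv.sum_mul_sum_le_card_mul_sum
      have hsumd : (∑ k, (θ k - θ₀)) ≤ 0 := by
        rw [Finset.sum_sub_distrib, Finset.sum_const, Finset.card_univ, Fintype.card_fin,
          nsmul_eq_mul]
        have := hsum
        linarith
      have hsumW : (∑ k, G (T k s) * Hcoef (fun j => q j s) k) ≤ 0 :=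
        Finset.sum_nonpos (fun k _ => mul_nonpos_of_nonpos_of_nonneg (hGle (T k s))
          (Hcoef_nonneg hn1 (fun k => hq0 k s) (fun k => hq1 k s) k))
      have h0le : (0:ℝ) ≤ (∑ k, (θ k - θ₀)) *
          ∑ k, G (T k s) * Hcoef (fun j => q j s) k :=
        by nlinarith [hsumd, hsumW]
      have hcard : (0:ℝ) < (Fintype.card (Fin n) : ℝ) := by
        rw [Fintype.card_fin]
        exact_mod_cast Nat.lt_of_lt_of_le Nat.zero_lt_two hn
      have hSnn : (0:ℝ) ≤ ∑ k, (θ k - θ₀) * (G (T k s) * Hcoef (fun j => q j s) k) := by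
        by_contra hneg
        push_neg at hneg
        have : (Fintype.card (Fin n) : ℝ) *
            (∑ k, (θ k - θ₀) * (G (T k s) * Hcoef (fun j => q j s) k)) < 0 :=
          mul_neg_of_pos_of_neg hcard hneg
        linarith [le_trans h0le cheb]
      rw [hΨ'def]
      convert hSnn using 1
      apply Finset.sum_congr rfl
      intro k _
      ring
  exact le_of_hasDerivAt_nonneg_except hfin.toFinset ψ Ψ' 0 1 zero_le_one hψc hgood
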